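/- Let q be real with |q| > 1/2, a = 1/(2q), N ∈ ℕ, l = 2^N, R = (2q)^{N−1}. Then for every j with 0 ≤ j ≤ 2^{N−1}, setting t_j = j/2^{N−1}, it holds that (S_q(t_j · l) − t_j · S_q(l))/R = −q · T_a(t_j). -/

import Mathlib

open scoped BigOperators

/-- distance from `x` to the nearest integer -/
noncomputable def tau (x : ℝ) : ℝ := |x - round x|

/-- q-weighted binary digit sum: `s_q(n) = Σ ω_i q^(i+1)` -/
noncomputable def sdigq (q : ℝ) (n : ℕ) : ℝ :=
  ∑ i ∈ Finset.range n, if n.testBit i then q ^ (i + 1) else 0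

/-- `S_q(n) = Σ_{k<n} s_q(k)` -/
noncomputable def Sdigq (q : ℝ) (n : ℕ) : ℝ := ∑ k ∈ Finset.range n, sdigq q k

/-- Takagi–Landsberg function -/
noncomputable def Ta (a x : ℝ) : ℝ := ∑' n : ℕ, a ^ n * tau (2 ^ n * x)

lemma tau_natCast (n : ℕ) : tau n = 0 := by simp [tau]

lemma tau_nat (m j : ℕ) :
    tau ((j : ℝ) / 2 ^ (m+1)) =
      (if 2^m ≤ j % 2^(m+1) then ((2^(m+1) : ℕ) - (j % 2^(m+1) : ℕ) : ℝ) else (j % 2^(m+1) : ℕ)) / 2^(m+1) := by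
  set P := 2^(m+1) with hP
  have hPpos : 0 < P := Nat.pow_pos (by norm_num)
  have hP0 : (0:ℝ) < (P:ℝ) := by exact_mod_cast hPpos
  have hr : j % P < P := Nat.mod_lt _ hPpos
  have hdm := Nat.div_add_mod j P
  have h2m : (2:ℝ)^m = P / 2 := by
    rw [hP]; push_cast [pow_succ]; ring
  have hx : (j : ℝ) / P = ((j % P : ℕ) : ℝ) / P + (j / P : ℕ) := by
    have hj : ((j:ℝ)) = ↑(j % P + j / P * P) := by rw [Nat.mod_add_div']
    push_cast at hj
    rw [hj, add_div, mul_div_cancel_right₀ _ hP0.ne']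
  have hcast : ((2:ℝ))^(m+1) = (P : ℝ) := by rw [hP]; push_cast; ring
  rw [hcast, hx]
  unfold tau
  rw [round_add_natCast]
  have hrle : ((j % P : ℕ) : ℝ) < P := by exact_mod_cast hr
  by_cases hb : 2^m ≤ j % P
  · have hble : (P:ℝ)/2 ≤ ((j % P : ℕ) : ℝ) := by
      rw [← h2m]; exact_mod_cast hb
    have h1 : round (((j % P : ℕ) : ℝ) / P) = 1 := by
      rw [round_eq, Int.floor_eq_iff]
      push_cast
      constructor
      · rw [div_add' _ _ _ (ne_of_gt hP0), le_div_iff₀ hP0]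
        linarith
      · rw [div_add' _ _ _ (ne_of_gt hP0), div_lt_iff₀ hP0]
        linarith
    rw [h1, if_pos hb]
    simp only [Int.cast_add, Int.cast_one, Int.cast_natCast]
    have he : ((j % P : ℕ) : ℝ)/P + ((j / P : ℕ) : ℝ) - (1 + ((j / P : ℕ) : ℝ))
        = -(((P:ℝ) - ((j % P : ℕ) : ℝ))/P) := by
      field_simp
      ring
    rw [he, abs_neg, abs_of_nonneg (div_nonneg (by linarith) hP0.le)]
  · have hblt : ((j % P : ℕ) : ℝ) < (P:ℝ)/2 := by
      rw [← h2m]; exact_mod_cast Nat.lt_of_not_le hb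
    have h1 : round (((j % P : ℕ) : ℝ) / P) = 0 := by
      rw [round_eq, Int.floor_eq_iff]
      push_cast
      constructor
      · positivity
      · rw [div_add' _ _ _ (ne_of_gt hP0), div_lt_iff₀ hP0]
        linarith
    rw [h1, if_neg hb]
    simp only [Int.cast_zero, zero_add, Int.cast_natCast]
    rw [add_sub_cancel_right, abs_of_nonneg (by positivity)]

lemma testBit_iff (j m : ℕ) : j.testBit m = decide (2^m ≤ j % 2^(m+1)) := by
  have h1 : (j % 2^(m+1)).testBit m = j.testBit m := by
    rw [Nat.testBit_mod_two_pow]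
    simp [Nat.lt_succ_self]
  rw [← h1, Nat.testBit_eq_decide_div_mod_eq]
  have hr : j % 2^(m+1) < 2^(m+1) := Nat.mod_lt _ (by positivity)
  rw [pow_succ] at hr
  by_cases hb : 2^m ≤ j % 2^(m+1)
  · have : j % 2^(m+1) / 2^m = 1 := Nat.div_eq_of_lt_le (by simpa using hb) (by omega)
    simp [this, hb]
  · have : j % 2^(m+1) / 2^m = 0 := Nat.div_eq_of_lt (by omega)
    simp [this, hb]

lemma tau_step (m j : ℕ) :
    tau (((j+1 : ℕ) : ℝ) / 2 ^ (m+1)) =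
      tau ((j : ℝ) / 2 ^ (m+1)) + (if j.testBit m then (-1:ℝ) else 1) / 2 ^ (m+1) := by
  have hppos : 0 < 2^m := Nat.pow_pos (by norm_num)
  have hP : (2:ℕ)^(m+1) = 2 * 2^m := by rw [pow_succ]; ring
  have hPr : (2:ℝ)^(m+1) = 2 * 2^m := by rw [pow_succ]; ring
  have hr : j % 2^(m+1) < 2^(m+1) := Nat.mod_lt _ (by positivity)
  have hP0 : ((2:ℝ)^(m+1)) ≠ 0 := by positivity
  rw [tau_nat, tau_nat, testBit_iff]
  set r := j % 2^(m+1) with hrdef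
  rcases eq_or_lt_of_le (Nat.succ_le_of_lt hr) with he | hlt
  · -- r + 1 = 2^(m+1) : wraps to 0
    have he' : r + 1 = 2^(m+1) := he
    have h1 : (j+1) % 2^(m+1) = 0 := by
      rw [Nat.add_mod, ← hrdef, Nat.mod_eq_of_lt (by omega : 1 < 2^(m+1)), he', Nat.mod_self]
    have hble : 2^m ≤ r := by omega
    rw [h1, if_neg (by omega : ¬ 2^m ≤ 0), if_pos hble, if_pos (by simpa using hble)]
    have hre : (r:ℝ) = 2^(m+1) - 1 := by
      have := congrArg (Nat.cast (R := ℝ)) he'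
      push_cast at this
      linarith
    push_cast
    rw [hre]
    field_simp
    ring
  · have h1 : (j+1) % 2^(m+1) = r + 1 := by
      rw [Nat.add_mod, ← hrdef, Nat.mod_eq_of_lt (by omega : 1 < 2^(m+1)), Nat.mod_eq_of_lt hlt]
    rw [h1]
    by_cases hble : 2^m ≤ r
    · have h2 : 2^m ≤ r + 1 := by omega
      rw [if_pos h2, if_pos hble, if_pos (by simpa using hble)]
      push_cast [Nat.cast_sub hlt.le, Nat.cast_sub hr.le]
      field_simp
      ring
    · by_cases h2 : 2^m ≤ r + 1
      · have h3 : r + 1 = 2^m := by omega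
        have h3' : (r:ℝ) = 2^m - 1 := by
          have := congrArg (Nat.cast (R := ℝ)) h3
          push_cast at this
          linarith
        rw [if_pos h2, if_neg hble, if_neg (by simpa using hble)]
        push_cast [Nat.cast_sub hlt.le]
        rw [h3', hPr]
        field_simp
        ring
      · rw [if_neg h2, if_neg hble, if_neg (by simpa using hble)]
        push_cast
        field_simp

lemma testBit_false_of_le {k i : ℕ} (h : k ≤ i) : k.testBit i = false := by
  apply Nat.testBit_eq_false_of_lt
  calc k < 2^k := (Nat.lt_two_pow_self (n := k))
    _ ≤ 2^i := Nat.pow_le_pow_right (by norm_num) h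

lemma sdigq_eq (q : ℝ) {k L : ℕ} (h : k < 2^L) :
    sdigq q k = ∑ i ∈ Finset.range L, if k.testBit i then q ^ (i + 1) else 0 := by
  unfold sdigq
  rcases le_total k L with hkL | hLk
  · apply Finset.sum_subset (Finset.range_subset_range.2 hkL)
    intro i _ hi
    simp only [Finset.mem_range, not_lt] at hi
    simp [testBit_false_of_le hi]
  · symm
    apply Finset.sum_subset (Finset.range_subset_range.2 hLk)
    intro i _ hi
    simp only [Finset.mem_range, not_lt] at hi
    have hb : k.testBit i = false :=
      Nat.testBit_eq_false_of_lt (h.trans_le (Nat.pow_le_pow_right (by norm_num) hi))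
    simp [hb]

lemma sdigq_double (q : ℝ) (j : ℕ) (b : ℕ) (hb : b ≤ 1) :
    sdigq q (2 * j + b) = b * q + q * sdigq q j := by
  have h1 : 2 * j + b < 2 ^ (j + 1) := by
    have := (Nat.lt_two_pow_self (n := j)); omega
  rw [sdigq_eq q h1, sdigq_eq q (Nat.lt_two_pow_self (n := j)), Finset.sum_range_succ']
  have h0 : (2 * j + b).testBit 0 = decide (b = 1) := by
    rw [Nat.testBit_zero]
    congr 1
    simp only [eq_iff_iff]
    omega
  have hs : ∀ i, (2 * j + b).testBit (i + 1) = j.testBit i := by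
    intro i
    rw [Nat.testBit_succ]
    congr 1
    omega
  rw [h0]
  simp only [hs]
  rw [Finset.mul_sum]
  have hterm : ∀ i ∈ Finset.range j, (if j.testBit i then q ^ (i + 1 + 1) else 0)
      = q * (if j.testBit i then q ^ (i + 1) else 0) := by
    intro i _
    split <;> ring
  rw [Finset.sum_congr rfl hterm]
  interval_cases b <;> simp [pow_one] <;> ring

lemma key (q : ℝ) (M : ℕ) (j : ℕ) (hj : j ≤ 2^M) :
    Sdigq q (2*j) = j * (∑ i ∈ Finset.range (M+1), q^(i+1))
      - ∑ m ∈ Finset.range M, 2^(m+1) * q^(m+2) * tau ((j:ℝ) / 2^(m+1)) := by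
  induction j with
  | zero => simp [Sdigq, tau]
  | succ j ih =>
    have hj' : j ≤ 2^M := by omega
    have hjlt : j < 2^M := by omega
    have hS : Sdigq q (2*(j+1)) = Sdigq q (2*j) + sdigq q (2*j) + sdigq q (2*j+1) := by
      unfold Sdigq
      rw [show 2*(j+1) = (2*j+1)+1 by ring, Finset.sum_range_succ, Finset.sum_range_succ]
    have hd0 : sdigq q (2*j) = q * sdigq q j := by
      simpa using sdigq_double q j 0 (by norm_num)
    rw [hS, hd0, sdigq_double q j 1 (by norm_num), ih hj']
    have hC : ∀ m ∈ Finset.range M, (2:ℝ)^(m+1) * q^(m+2) * tau ((((j+1):ℕ):ℝ)/2^(m+1))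
        = 2^(m+1)*q^(m+2)*tau ((j:ℝ)/2^(m+1)) + q^(m+2) * (if j.testBit m then (-1:ℝ) else 1) := by
      intro m _
      rw [tau_step]
      have h2 : (2:ℝ)^(m+1) ≠ 0 := by positivity
      split_ifs <;> field_simp
    rw [Finset.sum_congr rfl hC, Finset.sum_add_distrib, sdigq_eq q hjlt,
      Finset.sum_range_succ' (fun i => q^(i+1)) M]
    have hterm : ∀ m ∈ Finset.range M, q^(m+1+1)
        = 2*q*(if j.testBit m then q^(m+1) else 0)
          + q^(m+2) * (if j.testBit m then (-1:ℝ) else 1) := by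
      intro m _
      split <;> ring
    rw [Finset.sum_congr rfl hterm, Finset.sum_add_distrib, ← Finset.mul_sum]
    push_cast
    ring

theorem limiting_curve (q : ℝ) (hq : 1/2 < |q|) (N : ℕ) (hN : 1 ≤ N)
    (j : ℕ) (hj : j ≤ 2 ^ (N - 1)) :
    (Sdigq q (2 * j) - ((j : ℝ) / 2 ^ (N - 1)) * Sdigq q (2 ^ N)) / (2 * q) ^ (N - 1)
      = -q * Ta (1/(2*q)) ((j : ℝ) / 2 ^ (N - 1)) := by
  have hq0 : q ≠ 0 := by
    intro h
    rw [h] at hq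
    norm_num at hq
  have h2q : (2*q : ℝ) ≠ 0 := mul_ne_zero two_ne_zero hq0
  set M := N - 1 with hM
  have hNM : N = M + 1 := by omega
  have h2M : ((2:ℝ))^M ≠ 0 := by positivity
  -- value of Sdigq q (2^N)
  have hS2N : Sdigq q (2^N) = 2^M * (∑ i ∈ Finset.range (M+1), q^(i+1)) := by
    have hk := key q M (2^M) le_rfl
    have htz : ∀ m ∈ Finset.range M, (2:ℝ)^(m+1) * q^(m+2) * tau (((2^M : ℕ):ℝ) / 2^(m+1)) = 0 := by
      intro m hm
      have hmM : m < M := Finset.mem_range.1 hm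
      have harg : ((2^M : ℕ):ℝ) / 2^(m+1) = ((2^(M-1-m) : ℕ):ℝ) := by
        push_cast
        rw [div_eq_iff (by positivity : ((2:ℝ)^(m+1)) ≠ 0), ← pow_add]
        congr 1
        omega
      rw [harg, tau_natCast, mul_zero]
    rw [Finset.sum_congr rfl htz, Finset.sum_const, smul_zero, sub_zero] at hk
    rw [hNM, show 2^(M+1) = 2*2^M by ring, hk]
    push_cast
    ring
  -- Ta at the dyadic point is a finite sum
  have hTa : Ta (1/(2*q)) ((j:ℝ)/2^M)
      = ∑ n ∈ Finset.range M, (1/(2*q))^n * tau ((2:ℝ)^n * ((j:ℝ)/2^M)) := by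
    unfold Ta
    apply tsum_eq_sum
    intro n hn
    have hn' : M ≤ n := by simpa [Finset.mem_range, not_lt] using hn
    have harg : (2:ℝ)^n * ((j:ℝ)/2^M) = ((j * 2^(n-M) : ℕ):ℝ) := by
      push_cast
      rw [show (2:ℝ)^n = 2^(n-M) * 2^M by rw [← pow_add]; congr 1; omega]
      field_simp
    rw [harg, tau_natCast, mul_zero]
  have main : ∀ m ∈ Finset.range M,
      -q * ((1/(2*q))^(M-1-m) * tau ((2:ℝ)^(M-1-m) * ((j:ℝ)/2^M)))
        = -(2^(m+1) * q^(m+2) * tau ((j:ℝ)/2^(m+1))) / (2*q)^M := by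
    intro m hm
    have hmM : m < M := Finset.mem_range.1 hm
    have harg : (2:ℝ)^(M-1-m) * ((j:ℝ)/2^M) = (j:ℝ) / 2^(m+1) := by
      rw [show (2:ℝ)^M = 2^(M-1-m) * 2^(m+1) by rw [← pow_add]; congr 1; omega]
      field_simp
    rw [harg, show (2*q:ℝ)^M = (2*q)^(M-1-m) * (2*q)^(m+1) by rw [← pow_add]; congr 1; omega]
    have h1 : ((2*q):ℝ)^(M-1-m) ≠ 0 := pow_ne_zero _ h2q
    have h2 : ((2*q):ℝ)^(m+1) ≠ 0 := pow_ne_zero _ h2q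
    rw [one_div_pow]
    field_simp
    ring
  have hnum : Sdigq q (2 * j) - ((j : ℝ) / 2 ^ M) * Sdigq q (2 ^ N)
      = -(∑ m ∈ Finset.range M, 2^(m+1) * q^(m+2) * tau ((j:ℝ) / 2^(m+1))) := by
    rw [key q M j hj, hS2N]
    field_simp
    ring
  rw [hnum, hTa,
    ← Finset.sum_range_reflect (fun n => (1/(2*q))^n * tau ((2:ℝ)^n * ((j:ℝ)/2^M))) M,
    Finset.mul_sum, Finset.sum_congr rfl main, ← Finset.sum_div, Finset.sum_neg_distrib]
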